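/- arXiv:2311.04628 — 4 statements merged into one kernel-verified Lean document; each statement's English description precedes it below -/
import Mathlib

section
/- For all ε ∈ (0, 1/2), t > 0, s' ≥ 0: ∫₀^t (1/√(s+2ε²))·(1/(s'+s+2ε²)) ds ≤ π/√(s'+2ε²). -/
open Set Real
open MeasureTheory

/-- For `ε ∈ (0,1/2)`, `t > 0`, `s' ≥ 0`:
`∫₀^t (s+2ε²)^{-1/2}·(s'+s+2ε²)^{-1} ds ≤ π/√(s'+2ε²)`. -/
theorem kernel_time_integral_bound (ε t s' : ℝ)
    (hε : ε ∈ Ioo (0:ℝ) (1/2)) (ht : 0 < t) (hs' : 0 ≤ s') :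
    (∫ s in (0:ℝ)..t, (1 / Real.sqrt (s + 2*ε^2)) * (1 / (s' + s + 2*ε^2))) ≤
      Real.pi / Real.sqrt (s' + 2*ε^2) := by
  obtain ⟨hε0, hε2⟩ := hε
  have ha : (0:ℝ) < 2*ε^2 := by positivity
  set c := s' + 2*ε^2 with hc_def
  have hc : 0 < c := by positivity
  have hsc : 0 < Real.sqrt c := Real.sqrt_pos.mpr hc
  have hsc2 : Real.sqrt c ^ 2 = c := Real.sq_sqrt hc.le
  set f : ℝ → ℝ := fun s => (1 / Real.sqrt (s + 2*ε^2)) * (1 / (s' + s + 2*ε^2)) with hf_def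
  set g : ℝ → ℝ := fun s => (1 / Real.sqrt s) * (1 / (s + c)) with hg_def
  -- f is continuous on [0,t], hence interval integrable
  have hf_int : IntervalIntegrable f volume 0 t := by
    apply ContinuousOn.intervalIntegrable
    rw [uIcc_of_le ht.le]
    apply ContinuousOn.mul
    · apply ContinuousOn.div continuousOn_const
      · exact (Real.continuous_sqrt.comp (by fun_prop)).continuousOn
      · intro x hx
        have : 0 < x + 2*ε^2 := by have := hx.1; positivity
        exact (Real.sqrt_pos.mpr this).ne'
    · apply ContinuousOn.div continuousOn_const (by fun_prop)
      intro x hx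
      have : 0 < s' + x + 2*ε^2 := by have := hx.1; positivity
      exact this.ne'
  -- g is interval integrable by comparison with s^(-1/2)/c
  have hg_int : IntervalIntegrable g volume 0 t := by
    have h1 : IntervalIntegrable (fun s : ℝ => s ^ (-(1:ℝ)/2) * (1/c)) volume 0 t :=
      (intervalIntegral.intervalIntegrable_rpow' (by norm_num)).mul_const _
    apply h1.mono_fun
    · apply Measurable.aestronglyMeasurable
      apply Measurable.mul
      · exact (measurable_const.div Real.continuous_sqrt.measurable)
      · exact measurable_const.div (measurable_id.add_const c)
    · rw [Filter.EventuallyLE, ae_restrict_iff' measurableSet_uIoc]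
      filter_upwards with x hx
      rw [uIoc_of_le ht.le] at hx
      obtain ⟨hx0, hxt⟩ := hx
      have hgx : g x = x ^ (-(1:ℝ)/2) * (1/(x+c)) := by
        rw [hg_def]
        simp only
        rw [Real.sqrt_eq_rpow, show ((-1:ℝ)/2) = -(1/2) by norm_num,
          Real.rpow_neg hx0.le, one_div]
      rw [Real.norm_eq_abs, Real.norm_eq_abs, hgx]
      have h2 : 0 < x + c := by linarith
      rw [abs_of_nonneg (by positivity), abs_of_nonneg (by positivity)]
      exact mul_le_mul_of_nonneg_left (one_div_le_one_div_of_le hc (by linarith))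
        (by positivity)
  -- pointwise a.e. bound f ≤ g on [0,t]
  have hmono : (∫ s in (0:ℝ)..t, f s) ≤ ∫ s in (0:ℝ)..t, g s := by
    apply intervalIntegral.integral_mono_ae_restrict ht.le hf_int hg_int
    rw [Filter.EventuallyLE, ae_restrict_iff' measurableSet_Icc]
    have h0 : ∀ᵐ x : ℝ ∂volume, x ≠ 0 := by
      rw [MeasureTheory.ae_iff]
      simp only [ne_eq, not_not, Set.setOf_eq_eq_singleton]
      exact Real.volume_singleton
    filter_upwards [h0] with x hx0 hx
    obtain ⟨hx1, hx2⟩ := hx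
    have hxpos : 0 < x := lt_of_le_of_ne hx1 (Ne.symm hx0)
    have hsx : 0 < Real.sqrt x := Real.sqrt_pos.mpr hxpos
    have hxc : s' + x + 2*ε^2 = x + c := by rw [hc_def]; ring
    rw [hf_def, hg_def]
    simp only [hxc]
    exact mul_le_mul_of_nonneg_right
      (one_div_le_one_div_of_le hsx (Real.sqrt_le_sqrt (by linarith)))
      (by positivity)
  -- compute ∫ g via FTC
  have hFTC : (∫ s in (0:ℝ)..t, g s) =
      (2 / Real.sqrt c) * Real.arctan (Real.sqrt t / Real.sqrt c) := by
    have := intervalIntegral.integral_eq_sub_of_hasDeriv_right_of_le ht.le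
      (f := fun s => (2 / Real.sqrt c) * Real.arctan (Real.sqrt s / Real.sqrt c))
      (f' := g) ?_ ?_ hg_int
    · rw [this]; simp [Real.sqrt_zero, Real.arctan_zero]
    · apply Continuous.continuousOn
      continuity
    · intro x hx
      have hxpos : 0 < x := hx.1
      have hsx : 0 < Real.sqrt x := Real.sqrt_pos.mpr hxpos
      have h1 : HasDerivAt Real.sqrt (1 / (2 * Real.sqrt x)) x :=
        Real.hasDerivAt_sqrt hxpos.ne'
      have h2 : HasDerivAt (fun s => Real.sqrt s / Real.sqrt c)
          ((1 / (2 * Real.sqrt x)) / Real.sqrt c) x := h1.div_const _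
      have h3 : HasDerivAt Real.arctan
          (1 / (1 + (Real.sqrt x / Real.sqrt c)^2)) (Real.sqrt x / Real.sqrt c) :=
        Real.hasDerivAt_arctan _
      have h4 := (h3.comp x h2).const_mul (2 / Real.sqrt c)
      have heq : (2 / Real.sqrt c) * (1 / (1 + (Real.sqrt x / Real.sqrt c)^2) *
          ((1 / (2 * Real.sqrt x)) / Real.sqrt c)) = g x := by
        rw [hg_def]
        have hx2 : Real.sqrt x ^ 2 = x := Real.sq_sqrt hxpos.le
        have hpos : 0 < x + c := by linarith
        simp only [div_pow, hx2, hsc2]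
        rw [show (1:ℝ) + x/c = (x+c)/c by field_simp; ring, one_div_div]
        field_simp
        linear_combination (-1) * hsc2
      rw [heq] at h4
      exact h4.hasDerivWithinAt
  calc (∫ s in (0:ℝ)..t, f s) ≤ ∫ s in (0:ℝ)..t, g s := hmono
    _ = (2 / Real.sqrt c) * Real.arctan (Real.sqrt t / Real.sqrt c) := hFTC
    _ ≤ (2 / Real.sqrt c) * (Real.pi / 2) :=
        mul_le_mul_of_nonneg_left (Real.arctan_lt_pi_div_two _).le (by positivity)
    _ = Real.pi / Real.sqrt c := by field_simp
end

section
/- Let m ∈ R, m̄ = max(m,0), ε ∈ (0,1/2), t > 0, λ_ε > 0, and for integer k ≥ 1 define I_k := ∫_{[0,t]^k} ∏_{j=1}^k [λ_ε² e^{m(s_j+s_{j+1})} / (2π(s_j+s_{j+1}+2ε²))] ds₁…ds_k, with the cyclic convention s_{k+1} = s₁. Then I_k ≤ (λ_ε e^{m̄ t})^{2k} / (2^k π) · log(1 + t/ε²). -/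
open MeasureTheory Real Set


lemma real_key (b δ t : ℝ) (hb : 0 < b) (hδ : 0 < δ) (hδt : δ ≤ t) :
    ∫ y in δ..t, (Real.sqrt y)⁻¹ * (y + b)⁻¹ ≤ π * (Real.sqrt b)⁻¹ := by
  have hsb : 0 < Real.sqrt b := Real.sqrt_pos.mpr hb
  set F : ℝ → ℝ := fun y => 2 * (Real.sqrt b)⁻¹ * Real.arctan (Real.sqrt y / Real.sqrt b) with hF
  have hderiv : ∀ y ∈ Set.uIcc δ t, HasDerivAt F ((Real.sqrt y)⁻¹ * (y + b)⁻¹) y := by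
    intro y hy
    rw [Set.uIcc_of_le hδt] at hy
    have hy0 : 0 < y := lt_of_lt_of_le hδ hy.1
    have hsy : 0 < Real.sqrt y := Real.sqrt_pos.mpr hy0
    have h1 : HasDerivAt (fun z => Real.sqrt z / Real.sqrt b)
        ((1 / (2 * Real.sqrt y)) / Real.sqrt b) y :=
      (Real.hasDerivAt_sqrt hy0.ne').div_const _
    have h2 := (Real.hasDerivAt_arctan (Real.sqrt y / Real.sqrt b)).comp y h1
    have h3 := h2.const_mul (2 * (Real.sqrt b)⁻¹)
    refine h3.congr_deriv (Eq.symm ?_)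
    have hyy : Real.sqrt y * Real.sqrt y = y := Real.mul_self_sqrt hy0.le
    have hbb : Real.sqrt b * Real.sqrt b = b := Real.mul_self_sqrt hb.le
    have h4 : (Real.sqrt y / Real.sqrt b) ^ 2 = y / b := by
      rw [div_pow, sq, sq, hyy, hbb]
    rw [h4]
    field_simp
    linear_combination (b + y) * hbb
  have hint : IntervalIntegrable (fun y => (Real.sqrt y)⁻¹ * (y + b)⁻¹) volume δ t := by
    apply ContinuousOn.intervalIntegrable
    rw [Set.uIcc_of_le hδt]
    apply ContinuousOn.mul
    · exact (Real.continuous_sqrt.continuousOn).inv₀ fun y hy =>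
        (Real.sqrt_pos.mpr (lt_of_lt_of_le hδ hy.1)).ne'
    · exact ((continuous_id.add continuous_const).continuousOn).inv₀ fun y hy => by
        have : 0 < y := lt_of_lt_of_le hδ hy.1; show y + b ≠ 0; positivity
  rw [intervalIntegral.integral_eq_sub_of_hasDerivAt hderiv hint]
  have h5 : F t ≤ 2 * (Real.sqrt b)⁻¹ * (π / 2) := by
    apply mul_le_mul_of_nonneg_left (Real.arctan_lt_pi_div_two _).le
    positivity
  have h6 : 0 ≤ F δ := by
    apply mul_nonneg (by positivity)
    rw [← Real.arctan_zero]
    exact Real.arctan_strictMono.monotone (by positivity)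
  nlinarith

lemma lint_key (b t : ℝ) (hb : 0 < b) (ht : 0 < t) :
    ∫⁻ y in Ioc 0 t, ENNReal.ofReal ((Real.sqrt y)⁻¹ * (y + b)⁻¹) ≤
      ENNReal.ofReal (π * (Real.sqrt b)⁻¹) := by
  set f : ℝ → ℝ := fun y => (Real.sqrt y)⁻¹ * (y + b)⁻¹ with hf
  have hmeas : Measurable f :=
    (Real.continuous_sqrt.measurable.inv).mul ((measurable_id.add_const b).inv)
  -- pieces
  have hpiece : ∀ n : ℕ, ∫⁻ y in Ioc (t / (n+1)) t, ENNReal.ofReal (f y) ≤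
      ENNReal.ofReal (π * (Real.sqrt b)⁻¹) := by
    intro n
    have hδ : 0 < t / (n+1) := by positivity
    have hδt : t / (n+1) ≤ t := by
      rw [div_le_iff₀ (by positivity)]
      nlinarith [Nat.cast_nonneg (α := ℝ) n]
    have hnn : ∀ y ∈ Ioc (t / (n+1)) t, 0 ≤ f y := by
      intro y hy
      have : 0 < y := lt_trans hδ hy.1
      have : 0 < y + b := by linarith
      positivity
    have hcont : ContinuousOn f (Icc (t / (n+1)) t) := by
      apply ContinuousOn.mul
      · exact (Real.continuous_sqrt.continuousOn).inv₀ fun y hy =>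
          (Real.sqrt_pos.mpr (lt_of_lt_of_le hδ hy.1)).ne'
      · exact ((continuous_id.add continuous_const).continuousOn).inv₀ fun y hy => by
          have : 0 < y := lt_of_lt_of_le hδ hy.1; show y + b ≠ 0; positivity
    have hι : IntegrableOn f (Ioc (t / (n+1)) t) :=
      (hcont.integrableOn_Icc).mono_set Ioc_subset_Icc_self
    rw [← ofReal_integral_eq_lintegral_ofReal hι
      ((ae_restrict_iff' measurableSet_Ioc).mpr (Filter.Eventually.of_forall hnn))]
    apply ENNReal.ofReal_le_ofReal
    rw [← intervalIntegral.integral_of_le hδt]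
    exact real_key b _ t hb hδ hδt
  -- monotone union
  have hunion : Ioc (0:ℝ) t = ⋃ n : ℕ, Ioc (t / (n+1)) t := by
    ext y
    simp only [mem_Ioc, mem_iUnion]
    constructor
    · rintro ⟨hy0, hyt⟩
      obtain ⟨n, hn⟩ := exists_nat_gt (t / y)
      refine ⟨n, ?_, hyt⟩
      rw [div_lt_iff₀ (by positivity)]
      have h1 := mul_lt_mul_of_pos_right hn hy0
      rw [div_mul_cancel₀ t hy0.ne'] at h1
      nlinarith
    · rintro ⟨n, hn, hyt⟩
      exact ⟨lt_trans (by positivity) hn, hyt⟩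
  have hmono : Monotone fun n : ℕ => (Ioc (t / (n+1)) t).indicator
      fun y => ENNReal.ofReal (f y) := by
    intro i j hij
    apply Set.indicator_le_indicator_of_subset
    · apply Ioc_subset_Ioc_left
      apply div_le_div_of_nonneg_left ht.le (by positivity)
      exact_mod_cast by omega
    · intro y; exact zero_le
  calc ∫⁻ y in Ioc 0 t, ENNReal.ofReal (f y)
      = ∫⁻ y, (Ioc (0:ℝ) t).indicator (fun y => ENNReal.ofReal (f y)) y := by
        rw [lintegral_indicator measurableSet_Ioc]
    _ = ∫⁻ y, ⨆ n : ℕ, (Ioc (t / (n+1)) t).indicator (fun y => ENNReal.ofReal (f y)) y := by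
        congr 1; ext y
        rw [hunion]
        exact Set.indicator_iUnion_apply (M := ENNReal) rfl _ _ _
    _ = ⨆ n : ℕ, ∫⁻ y, (Ioc (t / (n+1)) t).indicator (fun y => ENNReal.ofReal (f y)) y := by
        apply lintegral_iSup
        · exact fun n => (hmeas.ennreal_ofReal).indicator measurableSet_Ioc
        · exact hmono
    _ ≤ ENNReal.ofReal (π * (Real.sqrt b)⁻¹) := by
        apply iSup_le
        intro n
        refine le_trans (le_of_eq (lintegral_indicator measurableSet_Ioc _)) (hpiece n)

lemma key2 (c a t : ℝ) (hc : 0 < c) (ha : 0 ≤ a) (ht : 0 < t) :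
    ∫⁻ y in Icc 0 t, ENNReal.ofReal ((a + y + c)⁻¹ * (Real.sqrt (y + c))⁻¹) ≤
      ENNReal.ofReal π * ENNReal.ofReal ((Real.sqrt (a + c))⁻¹) := by
  rw [← Measure.restrict_congr_set Ioc_ae_eq_Icc]
  have hb : 0 < a + c := by linarith
  calc ∫⁻ y in Ioc 0 t, ENNReal.ofReal ((a + y + c)⁻¹ * (Real.sqrt (y + c))⁻¹)
      ≤ ∫⁻ y in Ioc 0 t, ENNReal.ofReal ((Real.sqrt y)⁻¹ * (y + (a + c))⁻¹) := by
        apply lintegral_mono_ae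
        filter_upwards [ae_restrict_mem measurableSet_Ioc] with y hy
        apply ENNReal.ofReal_le_ofReal
        have hy0 : 0 < y := hy.1
        have h1 : (Real.sqrt (y + c))⁻¹ ≤ (Real.sqrt y)⁻¹ := by
          apply inv_anti₀ (Real.sqrt_pos.mpr hy0)
          exact Real.sqrt_le_sqrt (by linarith)
        have h2 : (a + y + c) = y + (a + c) := by ring
        rw [mul_comm, h2]
        apply mul_le_mul_of_nonneg_right h1
        positivity
    _ ≤ ENNReal.ofReal (π * (Real.sqrt (a + c))⁻¹) := lint_key (a + c) t hb ht
    _ = ENNReal.ofReal π * ENNReal.ofReal ((Real.sqrt (a + c))⁻¹) :=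
        ENNReal.ofReal_mul pi_pos.le

lemma base_int (c t : ℝ) (hc : 0 < c) (ht : 0 < t) :
    ∫⁻ y in Icc (0:ℝ) t, ENNReal.ofReal ((y + c)⁻¹) ≤
      ENNReal.ofReal (Real.log (1 + t / c)) := by
  have hnn : ∀ y ∈ Icc (0:ℝ) t, 0 ≤ (y + c)⁻¹ := fun y hy => by
    have := hy.1; positivity
  have hcont : ContinuousOn (fun y : ℝ => (y + c)⁻¹) (Icc 0 t) :=
    ((continuous_id.add continuous_const).continuousOn).inv₀ fun y hy => by
      have := hy.1; show y + c ≠ 0; positivity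
  have hι : IntegrableOn (fun y : ℝ => (y + c)⁻¹) (Icc 0 t) := hcont.integrableOn_Icc
  rw [← ofReal_integral_eq_lintegral_ofReal hι
    ((ae_restrict_iff' measurableSet_Icc).mpr (Filter.Eventually.of_forall hnn))]
  apply ENNReal.ofReal_le_ofReal
  rw [integral_Icc_eq_integral_Ioc, ← intervalIntegral.integral_of_le ht.le]
  have : ∫ y in (0:ℝ)..t, (y + c)⁻¹ = ∫ y in c..(t + c), y⁻¹ := by
    simpa using intervalIntegral.integral_comp_add_right (a := 0) (b := t) (fun y => y⁻¹) c
  have h0 : (0:ℝ) ∉ Set.uIcc c (t + c) := by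
    rw [Set.uIcc_of_le (by linarith : c ≤ t + c)]
    simp only [mem_Icc, not_and, not_le]
    intro h; linarith
  rw [this, integral_inv h0]
  apply le_of_eq
  congr 1
  field_simp
  ring

noncomputable def Gf (c : ℝ) (u : ℝ) : ENNReal := ENNReal.ofReal ((Real.sqrt (u + c))⁻¹)
noncomputable def Kf (c : ℝ) (u v : ℝ) : ENNReal := ENNReal.ofReal ((u + v + c)⁻¹)

lemma Gf_meas (c : ℝ) : Measurable (Gf c) :=
  ((Real.continuous_sqrt.comp (continuous_id.add continuous_const)).measurable.inv).ennreal_ofReal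

lemma Kf_meas (c : ℝ) : Measurable (fun p : ℝ × ℝ => Kf c p.1 p.2) :=
  (((measurable_fst.add measurable_snd).add_const c).inv).ennreal_ofReal

lemma chain_meas (c : ℝ) (k : ℕ) :
    Measurable (fun x : Fin (k+1) → ℝ =>
      (Gf c (x 0) * ∏ j : Fin k, Kf c (x j.castSucc) (x j.succ)) * Gf c (x (Fin.last k))) := by
  apply Measurable.mul
  · apply Measurable.mul
    · exact (Gf_meas c).comp (measurable_pi_apply 0)
    · apply Finset.measurable_prod
      intro j _
      have h1 : Measurable (fun x : Fin (k+1) → ℝ => (x j.castSucc, x j.succ)) :=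
        (measurable_pi_apply _).prodMk (measurable_pi_apply _)
      exact (Kf_meas c).comp h1
  · exact (Gf_meas c).comp (measurable_pi_apply _)

lemma chain_bound (c t : ℝ) (hc : 0 < c) (ht : 0 < t) : ∀ k : ℕ,
    ∫⁻ x, (Gf c (x 0) * ∏ j : Fin k, Kf c (x j.castSucc) (x j.succ)) * Gf c (x (Fin.last k))
        ∂(Measure.pi fun _ : Fin (k+1) => (volume : Measure ℝ).restrict (Icc 0 t))
      ≤ ENNReal.ofReal π ^ k * ENNReal.ofReal (Real.log (1 + t / c)) := by
  set μ : Measure ℝ := (volume : Measure ℝ).restrict (Icc 0 t) with hμ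
  intro k
  induction k with
  | zero =>
    simp only [pow_zero, one_mul]
    have MP := measurePreserving_funUnique μ (Fin 1)
    have hcomp := MP.lintegral_comp (f := fun u => Gf c u * Gf c u)
      ((Gf_meas c).mul (Gf_meas c))
    simp only [MeasurableEquiv.funUnique_apply] at hcomp
    calc ∫⁻ x, (Gf c (x 0) * ∏ j : Fin 0, Kf c (x j.castSucc) (x j.succ)) * Gf c (x (Fin.last 0))
            ∂(Measure.pi fun _ : Fin 1 => μ)
        = ∫⁻ u, Gf c u * Gf c u ∂μ := by
          rw [← hcomp]
          congr 1
          funext x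
          simp [Fin.last]
      _ ≤ ENNReal.ofReal (Real.log (1 + t / c)) := by
          have h2 : ∀ᵐ u ∂μ, Gf c u * Gf c u = ENNReal.ofReal ((u + c)⁻¹) := by
            filter_upwards [ae_restrict_mem measurableSet_Icc] with u hu
            have hu0 : (0:ℝ) ≤ u := hu.1
            rw [Gf, ← ENNReal.ofReal_mul (by positivity), ← mul_inv,
              Real.mul_self_sqrt (by linarith)]
          rw [lintegral_congr_ae h2]
          exact base_int c t hc ht
  | succ k ih =>
    set i : Fin (k+2) := Fin.last (k+1) with hi
    set e := MeasurableEquiv.piFinSuccAbove (fun _ : Fin (k+2) => ℝ) i with he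
    have MP := measurePreserving_piFinSuccAbove (fun _ : Fin (k+2) => μ) i
    set F : (Fin (k+2) → ℝ) → ENNReal := fun x =>
      (Gf c (x 0) * ∏ j : Fin (k+1), Kf c (x j.castSucc) (x j.succ)) * Gf c (x (Fin.last (k+1)))
      with hF
    have hFmeas : Measurable F := chain_meas c (k+1)
    set A : (Fin (k+1) → ℝ) → ENNReal := fun x' =>
      Gf c (x' 0) * ∏ j : Fin k, Kf c (x' j.castSucc) (x' j.succ) with hA
    have hAmeas : Measurable A := by
      apply Measurable.mul
      · exact (Gf_meas c).comp (measurable_pi_apply 0)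
      · apply Finset.measurable_prod
        intro j _
        have h1 : Measurable (fun x : Fin (k+1) → ℝ => (x j.castSucc, x j.succ)) :=
          (measurable_pi_apply _).prodMk (measurable_pi_apply _)
        exact (Kf_meas c).comp h1
    have hcoord : ∀ (y : ℝ) (x' : Fin (k+1) → ℝ), F (e.symm (y, x')) =
        A x' * (Kf c (x' (Fin.last k)) y * Gf c y) := by
      intro y x'
      have hsymm : e.symm (y, x') = Fin.snoc x' y := by
        rw [he]
        simp only [MeasurableEquiv.piFinSuccAbove_symm_apply, hi, Fin.insertNthEquiv_last, Fin.insertNth_last']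
        rfl
      rw [hF, hsymm]
      simp only [Fin.prod_univ_castSucc, Fin.snoc_last, Fin.succ_last]
      have e0 : (Fin.snoc x' y : Fin (k+2) → ℝ) 0 = x' 0 := by
        rw [show (0 : Fin (k+2)) = Fin.castSucc 0 by simp, Fin.snoc_castSucc]
      have e1 : ∀ j : Fin k, (Fin.snoc x' y : Fin (k+2) → ℝ) (j.castSucc).castSucc
          = x' j.castSucc := fun j => Fin.snoc_castSucc _ _ _
      have e2 : ∀ j : Fin k, (Fin.snoc x' y : Fin (k+2) → ℝ) (j.castSucc).succ
          = x' j.succ := by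
        intro j
        rw [Fin.succ_castSucc, Fin.snoc_castSucc]
      have e3 : (Fin.snoc x' y : Fin (k+2) → ℝ) ((Fin.last k).castSucc) = x' (Fin.last k) :=
        Fin.snoc_castSucc _ _ _
      rw [e0, e3]
      have e4 : ∀ j : Fin k, Kf c ((Fin.snoc x' y : Fin (k+2) → ℝ) (j.castSucc).castSucc)
          ((Fin.snoc x' y : Fin (k+2) → ℝ) (j.castSucc).succ)
          = Kf c (x' j.castSucc) (x' j.succ) := by
        intro j; rw [e1 j, e2 j]
      rw [Finset.prod_congr rfl fun j _ => e4 j, hA]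
      ring
    have hae : ∀ᵐ x' ∂(Measure.pi fun _ : Fin (k+1) => μ), 0 ≤ x' (Fin.last k) := by
      have h0 : μ ((Icc (0:ℝ) t)ᶜ) = 0 := by
        rw [hμ, Measure.restrict_apply measurableSet_Icc.compl, compl_inter_self]
        simp
      have h1 := Measure.pi_eval_preimage_null (μ := fun _ : Fin (k+1) => μ)
        (i := Fin.last k) h0
      rw [ae_iff]
      apply measure_mono_null _ h1
      intro x' hx'
      simp only [mem_setOf_eq, not_le] at hx'
      simp only [mem_preimage, mem_compl_iff, mem_Icc, not_and, not_le]
      intro h; linarith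
    have hKGmeas : ∀ a : ℝ, Measurable (fun y => Kf c a y * Gf c y) := by
      intro a
      have h1 : Measurable (fun y : ℝ => (a, y)) := measurable_const.prodMk measurable_id
      exact ((Kf_meas c).comp h1).mul (Gf_meas c)
    have hkey : ∀ a : ℝ, 0 ≤ a → ∫⁻ y, Kf c a y * Gf c y ∂μ ≤
        ENNReal.ofReal π * Gf c a := by
      intro a ha
      have hcg : ∀ᵐ y ∂μ, Kf c a y * Gf c y =
          ENNReal.ofReal ((a + y + c)⁻¹ * (Real.sqrt (y + c))⁻¹) := by
        filter_upwards [ae_restrict_mem measurableSet_Icc] with y hy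
        have : (0:ℝ) ≤ a + y + c := by have := hy.1; linarith
        rw [Kf, Gf, ← ENNReal.ofReal_mul (by positivity)]
      rw [lintegral_congr_ae hcg]
      exact key2 c a t hc ha ht
    calc ∫⁻ x, F x ∂(Measure.pi fun _ : Fin (k+2) => μ)
        = ∫⁻ p, F (e.symm p) ∂(μ.prod (Measure.pi fun _ : Fin (k+1) => μ)) := by
          exact ((MeasurePreserving.symm e MP).lintegral_comp hFmeas).symm
      _ = ∫⁻ x', ∫⁻ y, F (e.symm (y, x')) ∂μ ∂(Measure.pi fun _ : Fin (k+1) => μ) := by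
          exact lintegral_prod_symm _ (hFmeas.comp e.symm.measurable).aemeasurable
      _ = ∫⁻ x', A x' * ∫⁻ y, Kf c (x' (Fin.last k)) y * Gf c y ∂μ
            ∂(Measure.pi fun _ : Fin (k+1) => μ) := by
          apply lintegral_congr
          intro x'
          simp only [hcoord]
          exact lintegral_const_mul _ (hKGmeas _)
      _ ≤ ∫⁻ x', ENNReal.ofReal π * (A x' * Gf c (x' (Fin.last k)))
            ∂(Measure.pi fun _ : Fin (k+1) => μ) := by
          apply lintegral_mono_ae
          filter_upwards [hae] with x' hx'
          calc A x' * ∫⁻ y, Kf c (x' (Fin.last k)) y * Gf c y ∂μ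
              ≤ A x' * (ENNReal.ofReal π * Gf c (x' (Fin.last k))) :=
                mul_le_mul_right (hkey _ hx') _
            _ = ENNReal.ofReal π * (A x' * Gf c (x' (Fin.last k))) := by ring
      _ = ENNReal.ofReal π * ∫⁻ x', A x' * Gf c (x' (Fin.last k))
            ∂(Measure.pi fun _ : Fin (k+1) => μ) := by
          exact lintegral_const_mul _ (hAmeas.mul ((Gf_meas c).comp (measurable_pi_apply _)))
      _ ≤ ENNReal.ofReal π * (ENNReal.ofReal π ^ k * ENNReal.ofReal (Real.log (1 + t / c))) :=
          mul_le_mul_right ih _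
      _ = ENNReal.ofReal π ^ (k+1) * ENNReal.ofReal (Real.log (1 + t / c)) := by ring

lemma pi_restrict (k : ℕ) (t : ℝ) :
    (volume : Measure (Fin k → ℝ)).restrict (Set.univ.pi fun _ => Icc (0:ℝ) t)
      = Measure.pi fun _ : Fin k => (volume : Measure ℝ).restrict (Icc 0 t) := by
  refine (Measure.pi_eq fun s hs => ?_).symm
  rw [Measure.restrict_apply (MeasurableSet.univ_pi hs), ← Set.pi_inter_distrib,
    volume_pi, Measure.pi_pi]
  exact Finset.prod_congr rfl fun i _ => (Measure.restrict_apply (hs i)).symm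

lemma kernel_le_G (c u v : ℝ) (hc : 0 < c) (hu : 0 ≤ u) (hv : 0 ≤ v) :
    Kf c u v ≤ Gf c u * Gf c v := by
  rw [Kf, Gf, Gf, ← ENNReal.ofReal_mul (by positivity)]
  apply ENNReal.ofReal_le_ofReal
  have h1 : Real.sqrt ((u + c) * (v + c)) ≤ u + v + c := by
    rw [show u + v + c = Real.sqrt ((u + v + c)^2) by
      rw [Real.sqrt_sq (by linarith)]]
    apply Real.sqrt_le_sqrt
    nlinarith
  have h2 : 0 < Real.sqrt ((u + c) * (v + c)) := Real.sqrt_pos.mpr (by positivity)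
  calc (u + v + c)⁻¹ ≤ (Real.sqrt ((u + c) * (v + c)))⁻¹ := inv_anti₀ h2 h1
    _ = (Real.sqrt (u + c))⁻¹ * (Real.sqrt (v + c))⁻¹ := by
        rw [Real.sqrt_mul (by linarith), mul_inv]

/-- v-cycle integral bound: with the cyclic convention `s_{k+1} = s₁`,
`∫_{[0,t]^k} ∏_{j=1}^k λ_ε² e^{m(s_j+s_{j+1})}/(2π(s_j+s_{j+1}+2ε²)) ds
  ≤ (λ_ε e^{m̄t})^{2k}/(2^k π) · log(1 + t/ε²)`, for every `k = n+1 ≥ 1`. -/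
theorem vcycle_integral_bound (m ε t lam : ℝ)
    (hε : ε ∈ Ioo (0:ℝ) (1/2)) (ht : 0 < t) (hlam : 0 < lam) (n : ℕ) :
    (∫ s in (Set.univ.pi fun _ : Fin (n+1) => Icc (0:ℝ) t),
        ∏ j : Fin (n+1),
          lam^2 * Real.exp (m * (s j + s (j+1))) /
            (2 * Real.pi * (s j + s (j+1) + 2*ε^2))) ≤
      (lam * Real.exp (max m 0 * t)) ^ (2*(n+1)) / (2^(n+1) * Real.pi) *
        Real.log (1 + t/ε^2) := by
  obtain ⟨hε0, hε2⟩ := hε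
  have hc : 0 < 2*ε^2 := by positivity
  set c : ℝ := 2*ε^2 with hcdef
  set E : ℝ := Real.exp (max m 0 * t) with hE
  have hE0 : 0 < E := Real.exp_pos _
  set D : ℝ := lam^2 * (E * E) / (2*Real.pi) with hD
  have hD0 : 0 ≤ D := by positivity
  set μ : Measure ℝ := (volume : Measure ℝ).restrict (Icc 0 t) with hμ
  set f : (Fin (n+1) → ℝ) → ℝ := fun s => ∏ j : Fin (n+1),
    lam^2 * Real.exp (m * (s j + s (j+1))) / (2 * Real.pi * (s j + s (j+1) + c)) with hf
  have hfmeas : Measurable f := by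
    apply Finset.measurable_prod
    intro j _
    have h1 : Measurable fun s : Fin (n+1) → ℝ => s j + s (j+1) :=
      (measurable_pi_apply j).add (measurable_pi_apply (j+1))
    exact ((Real.measurable_exp.comp (h1.const_mul m)).const_mul (lam^2)).div
      ((h1.add_const c).const_mul (2*Real.pi))
  have hfnonneg : ∀ s : Fin (n+1) → ℝ, (∀ j, s j ∈ Icc (0:ℝ) t) → 0 ≤ f s := by
    intro s hs
    apply Finset.prod_nonneg
    intro j _
    have h1 := (hs j).1
    have h2 := (hs (j+1)).1
    have : 0 ≤ s j + s (j+1) + c := by linarith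
    positivity
  -- pointwise bound
  have hpt : ∀ s : Fin (n+1) → ℝ, (∀ j, s j ∈ Icc (0:ℝ) t) →
      ENNReal.ofReal (f s) ≤ ENNReal.ofReal D ^ (n+1) *
        ((Gf c (s 0) * ∏ j : Fin n, Kf c (s j.castSucc) (s j.succ)) * Gf c (s (Fin.last n))) := by
    intro s hs
    have hfac : ∀ j : Fin (n+1),
        ENNReal.ofReal (lam^2 * Real.exp (m * (s j + s (j+1))) /
          (2 * Real.pi * (s j + s (j+1) + c))) ≤ ENNReal.ofReal D * Kf c (s j) (s (j+1)) := by
      intro j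
      have h1 := (hs j).1
      have h1t := (hs j).2
      have h2 := (hs (j+1)).1
      have h2t := (hs (j+1)).2
      have hw : 0 < s j + s (j+1) + c := by linarith
      rw [Kf, ← ENNReal.ofReal_mul hD0]
      apply ENNReal.ofReal_le_ofReal
      have hexp : Real.exp (m * (s j + s (j+1))) ≤ E * E := by
        rw [← Real.exp_add]
        apply Real.exp_le_exp.mpr
        have hst : s j + s (j+1) ≤ 2*t := by linarith
        have hm1 : m * (s j + s (j+1)) ≤ max m 0 * (s j + s (j+1)) :=
          mul_le_mul_of_nonneg_right (le_max_left m 0) (by linarith)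
        have hm2 : max m 0 * (s j + s (j+1)) ≤ max m 0 * (2*t) :=
          mul_le_mul_of_nonneg_left hst (le_max_right m 0)
        nlinarith [le_max_right m 0]
      calc lam^2 * Real.exp (m * (s j + s (j+1))) / (2 * Real.pi * (s j + s (j+1) + c))
          ≤ lam^2 * (E * E) / (2 * Real.pi * (s j + s (j+1) + c)) := by
            have hden : (0:ℝ) < 2 * Real.pi * (s j + s (j+1) + c) := by positivity
            exact (div_le_div_iff_of_pos_right hden).mpr
              (mul_le_mul_of_nonneg_left hexp (sq_nonneg lam))
        _ = D * (s j + s (j+1) + c)⁻¹ := by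
            rw [hD]
            field_simp
    calc ENNReal.ofReal (f s)
        = ∏ j : Fin (n+1), ENNReal.ofReal (lam^2 * Real.exp (m * (s j + s (j+1))) /
            (2 * Real.pi * (s j + s (j+1) + c))) := by
          rw [hf]
          exact ENNReal.ofReal_prod_of_nonneg fun j _ => by
            have h1 := (hs j).1; have h2 := (hs (j+1)).1
            have : 0 ≤ s j + s (j+1) + c := by linarith
            positivity
      _ ≤ ∏ j : Fin (n+1), (ENNReal.ofReal D * Kf c (s j) (s (j+1))) :=
          Finset.prod_le_prod' fun j _ => hfac j
      _ = ENNReal.ofReal D ^ (n+1) * ∏ j : Fin (n+1), Kf c (s j) (s (j+1)) := by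
          rw [Finset.prod_mul_distrib, Finset.prod_const, Finset.card_univ, Fintype.card_fin]
      _ = ENNReal.ofReal D ^ (n+1) * ((∏ j : Fin n, Kf c (s j.castSucc) (s j.succ)) *
            Kf c (s (Fin.last n)) (s 0)) := by
          congr 1
          rw [Fin.prod_univ_castSucc]
          congr 1
          · exact Finset.prod_congr rfl fun j _ => by rw [Fin.coeSucc_eq_succ]
          · rw [Fin.last_add_one]
      _ ≤ ENNReal.ofReal D ^ (n+1) * ((∏ j : Fin n, Kf c (s j.castSucc) (s j.succ)) *
            (Gf c (s (Fin.last n)) * Gf c (s 0))) := by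
          apply mul_le_mul_right
          apply mul_le_mul_right
          exact kernel_le_G c _ _ hc (hs _).1 (hs _).1
      _ = ENNReal.ofReal D ^ (n+1) *
            ((Gf c (s 0) * ∏ j : Fin n, Kf c (s j.castSucc) (s j.succ)) *
              Gf c (s (Fin.last n))) := by
          ring
  -- ae coordinate membership
  have hae : ∀ᵐ x ∂(Measure.pi fun _ : Fin (n+1) => μ), ∀ j, x j ∈ Icc (0:ℝ) t := by
    rw [ae_all_iff]
    intro j
    have h0 : μ ((Icc (0:ℝ) t)ᶜ) = 0 := by
      rw [hμ, Measure.restrict_apply measurableSet_Icc.compl, compl_inter_self]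
      simp
    have h1 := Measure.pi_eval_preimage_null (μ := fun _ : Fin (n+1) => μ) (i := j) h0
    rw [ae_iff]
    apply measure_mono_null _ h1
    intro x hx
    simpa using hx
  have hL : (∫⁻ x, ENNReal.ofReal (f x) ∂(Measure.pi fun _ : Fin (n+1) => μ)) ≤
      ENNReal.ofReal D ^ (n+1) *
        (ENNReal.ofReal π ^ n * ENNReal.ofReal (Real.log (1 + t / c))) := by
    calc ∫⁻ x, ENNReal.ofReal (f x) ∂(Measure.pi fun _ : Fin (n+1) => μ)
        ≤ ∫⁻ x, ENNReal.ofReal D ^ (n+1) *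
            ((Gf c (x 0) * ∏ j : Fin n, Kf c (x j.castSucc) (x j.succ)) *
              Gf c (x (Fin.last n))) ∂(Measure.pi fun _ : Fin (n+1) => μ) := by
          apply lintegral_mono_ae
          filter_upwards [hae] with x hx
          exact hpt x hx
      _ = ENNReal.ofReal D ^ (n+1) *
          ∫⁻ x, ((Gf c (x 0) * ∏ j : Fin n, Kf c (x j.castSucc) (x j.succ)) *
              Gf c (x (Fin.last n))) ∂(Measure.pi fun _ : Fin (n+1) => μ) :=
          lintegral_const_mul _ (chain_meas c n)
      _ ≤ ENNReal.ofReal D ^ (n+1) *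
            (ENNReal.ofReal π ^ n * ENNReal.ofReal (Real.log (1 + t / c))) :=
          mul_le_mul_right (chain_bound c t hc ht n) _
  -- final arithmetic
  have hπ : (0:ℝ) < π := pi_pos
  have hlog1 : Real.log (1 + t / c) ≤ Real.log (1 + t / ε^2) := by
    apply Real.log_le_log (by positivity)
    have : t / c ≤ t / ε^2 := by
      apply div_le_div_of_nonneg_left ht.le (by positivity)
      rw [hcdef]; nlinarith [sq_nonneg ε]
    linarith
  have hlog0 : 0 ≤ Real.log (1 + t / ε^2) := by
    apply Real.log_nonneg
    have : 0 ≤ t / ε^2 := by positivity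
    linarith
  have hcoeff : D^(n+1) * π^n = (lam*E)^(2*(n+1)) / (2^(n+1) * π) := by
    rw [hD, div_pow]
    field_simp
    ring
  have hRHS0 : 0 ≤ (lam*E)^(2*(n+1)) / (2^(n+1) * π) * Real.log (1 + t / ε^2) := by
    apply mul_nonneg _ hlog0
    positivity
  have hfinal : ENNReal.ofReal D ^ (n+1) *
      (ENNReal.ofReal π ^ n * ENNReal.ofReal (Real.log (1 + t / c))) ≤
      ENNReal.ofReal ((lam*E)^(2*(n+1)) / (2^(n+1) * π) * Real.log (1 + t / ε^2)) := by
    rw [← ENNReal.ofReal_pow hD0, ← ENNReal.ofReal_pow hπ.le,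
      ← ENNReal.ofReal_mul (by positivity), ← ENNReal.ofReal_mul (by positivity)]
    apply ENNReal.ofReal_le_ofReal
    rw [← mul_assoc, hcoeff]
    exact mul_le_mul_of_nonneg_left hlog1 (by positivity)
  -- convert Bochner integral
  have hbox : MeasurableSet (Set.univ.pi fun _ : Fin (n+1) => Icc (0:ℝ) t) :=
    MeasurableSet.univ_pi fun _ => measurableSet_Icc
  have hrwμ : (volume : Measure (Fin (n+1) → ℝ)).restrict
      (Set.univ.pi fun _ : Fin (n+1) => Icc (0:ℝ) t) = Measure.pi fun _ : Fin (n+1) => μ := by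
    rw [hμ]; exact pi_restrict (n+1) t
  have hnn : 0 ≤ᵐ[Measure.pi fun _ : Fin (n+1) => μ] f := by
    filter_upwards [hae] with x hx
    exact hfnonneg x hx
  have hgoal : (∫ s in (Set.univ.pi fun _ : Fin (n+1) => Icc (0:ℝ) t), f s) =
      (∫⁻ x, ENNReal.ofReal (f x) ∂(Measure.pi fun _ : Fin (n+1) => μ)).toReal := by
    rw [← hrwμ] at hnn ⊢
    exact integral_eq_lintegral_of_nonneg_ae hnn hfmeas.aestronglyMeasurable
  calc (∫ s in (Set.univ.pi fun _ : Fin (n+1) => Icc (0:ℝ) t), f s)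
      = (∫⁻ x, ENNReal.ofReal (f x) ∂(Measure.pi fun _ : Fin (n+1) => μ)).toReal := hgoal
    _ ≤ (lam*E)^(2*(n+1)) / (2^(n+1) * π) * Real.log (1 + t / ε^2) :=
        ENNReal.toReal_le_of_le_ofReal hRHS0 (hL.trans hfinal)
end

section
/- For every real m, t > 0, and ε ∈ (0,1/2), one has | (1/(2 log(1/ε))) ∫₀^t e^{2ms}/(s+ε²) ds − 1 | ≤ (e^{2|m| t} + |log(t+ε²)|) / (2 log(1/ε)). In particular, for every fixed t > 0, (1/(2 log(1/ε))) ∫₀^t e^{2ms}/(s+ε²) ds → 1 as ε → 0. -/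
open Set Real Filter

/-- `∫₀^t c e^{cs} ds = e^{ct} - 1`. -/
lemma exp_aux_integral_exp (c t : ℝ) :
    (∫ s in (0:ℝ)..t, c * Real.exp (c * s)) = Real.exp (c * t) - 1 := by
  have h : ∀ s ∈ Set.uIcc (0:ℝ) t, HasDerivAt (fun x => Real.exp (c * x))
      (c * Real.exp (c * s)) s := by
    intro s _
    have := (Real.hasDerivAt_exp (c * s)).comp s ((hasDerivAt_id s).const_mul c)
    simpa [mul_comm, Function.comp_def] using this
  have hint : IntervalIntegrable (fun s => c * Real.exp (c * s)) MeasureTheory.volume 0 t :=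
    (Continuous.intervalIntegrable (by continuity) 0 t)
  have := intervalIntegral.integral_eq_sub_of_hasDerivAt h hint
  simpa using this

/-- pointwise bound `|e^{2ms}-1| ≤ 2|m| e^{2|m|s} * (s + a)` for `s, a ≥ 0`. -/
lemma exp_aux_pointwise (m a s : ℝ) (hs : 0 ≤ s) (ha : 0 ≤ a) :
    |Real.exp (2*m*s) - 1| ≤ 2 * |m| * Real.exp (2 * |m| * s) * (s + a) := by
  set y : ℝ := 2 * |m| * s with hy
  have hy0 : 0 ≤ y := by positivity
  have hxy : |2*m*s| = y := by
    rw [hy, abs_mul, abs_mul, abs_two, abs_of_nonneg hs]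
  -- |e^x - 1| ≤ e^{|x|} - 1
  have h1 : |Real.exp (2*m*s) - 1| ≤ Real.exp y - 1 := by
    rcases le_or_gt 0 (2*m*s) with hx | hx
    · rw [abs_of_nonneg (by simpa using Real.one_le_exp hx)]
      have : 2*m*s ≤ y := by rw [← hxy]; exact le_abs_self _
      have := Real.exp_le_exp.mpr this
      linarith
    · have hxe : Real.exp (2*m*s) < 1 := by
        rw [← Real.exp_zero]; exact Real.exp_lt_exp.mpr hx
      rw [abs_of_nonpos (by linarith)]
      have h2 : -(2*m*s) ≤ y := by rw [← hxy]; exact neg_le_abs _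
      have h3 : -(2*m*s) + 1 ≤ Real.exp (-(2*m*s)) := Real.add_one_le_exp _
      have h4 : (2*m*s) + 1 ≤ Real.exp (2*m*s) := Real.add_one_le_exp _
      have h5 : Real.exp (-(2*m*s)) ≤ Real.exp y := Real.exp_le_exp.mpr h2
      linarith
  -- e^y - 1 ≤ y e^y
  have h2 : Real.exp y - 1 ≤ y * Real.exp y := by
    have h3 : -y + 1 ≤ Real.exp (-y) := Real.add_one_le_exp _
    have h4 : Real.exp (-y) * Real.exp y = 1 := by
      rw [← Real.exp_add]; simp
    have h5 : (0:ℝ) < Real.exp y := Real.exp_pos _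
    nlinarith
  have h3 : y * Real.exp y ≤ 2 * |m| * Real.exp (2 * |m| * s) * (s + a) := by
    rw [hy]
    have h5 : (0:ℝ) ≤ 2 * |m| * Real.exp (2 * |m| * s) := by positivity
    nlinarith [Real.exp_pos (2 * |m| * s)]
  linarith

lemma exp_aux_estimate (m t ε : ℝ) (ht : 0 < t) (hε : ε ∈ Ioo (0:ℝ) (1/2)) :
    |((1 / (2 * Real.log (1/ε))) * (∫ s in (0:ℝ)..t, Real.exp (2*m*s) / (s + ε^2)) - 1)| ≤
      (Real.exp (2 * |m| * t) + |Real.log (t + ε^2)|) / (2 * Real.log (1/ε)) := by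
  obtain ⟨hε0, hε2⟩ := hε
  set a : ℝ := ε^2 with hadef
  have ha : 0 < a := by positivity
  have hL : 0 < Real.log (1/ε) := Real.log_pos (by rw [lt_div_iff₀ hε0]; linarith)
  have hpos : ∀ s ∈ Set.uIcc (0:ℝ) t, 0 < s + a := by
    intro s hs
    rw [Set.uIcc_of_le ht.le] at hs
    have := hs.1
    linarith
  have hcont : ∀ (f : ℝ → ℝ), ContinuousOn f (Set.uIcc (0:ℝ) t) →
      IntervalIntegrable (fun s => f s / (s + a)) MeasureTheory.volume 0 t := by
    intro f hf
    apply ContinuousOn.intervalIntegrable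
    exact hf.div (by fun_prop) (fun s hs => (hpos s hs).ne')
  have hi1 : IntervalIntegrable (fun s => (Real.exp (2*m*s) - 1) / (s + a))
      MeasureTheory.volume 0 t := hcont _ (by fun_prop)
  have hi2 : IntervalIntegrable (fun s => 1 / (s + a)) MeasureTheory.volume 0 t :=
    hcont _ (by fun_prop)
  -- split the integral
  have hsplit : (∫ s in (0:ℝ)..t, Real.exp (2*m*s) / (s + a)) =
      (∫ s in (0:ℝ)..t, (Real.exp (2*m*s) - 1) / (s + a)) +
      (∫ s in (0:ℝ)..t, 1 / (s + a)) := by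
    rw [← intervalIntegral.integral_add hi1 hi2]
    apply intervalIntegral.integral_congr
    intro s hs
    field_simp
    ring
  -- compute the second integral
  have hI2 : (∫ s in (0:ℝ)..t, 1 / (s + a)) = Real.log (t + a) + 2 * Real.log (1/ε) := by
    have h1 : (∫ s in (0:ℝ)..t, 1 / (s + a)) = ∫ x in (0+a)..(t+a), 1 / x :=
      intervalIntegral.integral_comp_add_right (fun x => 1/x) a
    rw [h1, integral_one_div (by
      rw [Set.uIcc_of_le (by linarith : 0 + a ≤ t + a)]
      rintro ⟨h2, _⟩
      linarith)]
    rw [zero_add, Real.log_div (by linarith) ha.ne', hadef, Real.log_pow,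
      Real.log_div one_ne_zero hε0.ne', Real.log_one]
    push_cast
    ring
  -- bound the first integral
  set A := (∫ s in (0:ℝ)..t, (Real.exp (2*m*s) - 1) / (s + a)) with hA
  have hAbound : |A| ≤ Real.exp (2 * |m| * t) := by
    have h1 : |A| ≤ ∫ s in (0:ℝ)..t, |(Real.exp (2*m*s) - 1) / (s + a)| :=
      intervalIntegral.abs_integral_le_integral_abs ht.le
    have h2 : (∫ s in (0:ℝ)..t, |(Real.exp (2*m*s) - 1) / (s + a)|) ≤
        ∫ s in (0:ℝ)..t, 2 * |m| * Real.exp (2 * |m| * s) := by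
      apply intervalIntegral.integral_mono_on ht.le hi1.abs
        (Continuous.intervalIntegrable (by continuity) 0 t)
      intro s hs
      have hs0 : 0 ≤ s := hs.1
      have hsa : 0 < s + a := by linarith
      rw [abs_div, abs_of_pos hsa, div_le_iff₀ hsa]
      exact exp_aux_pointwise m a s hs0 ha.le
    have h3 : (∫ s in (0:ℝ)..t, 2 * |m| * Real.exp (2 * |m| * s)) =
        Real.exp (2 * |m| * t) - 1 := exp_aux_integral_exp (2 * |m|) t
    have h4 : Real.exp (2 * |m| * t) - 1 ≤ Real.exp (2 * |m| * t) := by linarith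
    linarith
  -- put everything together
  have hkey : (1 / (2 * Real.log (1/ε))) *
      (∫ s in (0:ℝ)..t, Real.exp (2*m*s) / (s + a)) - 1 =
      (A + Real.log (t + a)) / (2 * Real.log (1/ε)) := by
    rw [hsplit, hI2]
    field_simp
    ring
  rw [hkey, abs_div, abs_of_pos (by linarith : (0:ℝ) < 2 * Real.log (1/ε))]
  apply div_le_div_of_nonneg_right _ (by linarith)
  calc |A + Real.log (t + a)| ≤ |A| + |Real.log (t + a)| := abs_add_le _ _
    _ ≤ Real.exp (2 * |m| * t) + |Real.log (t + a)| := by linarith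

/-- Quantitative estimate on the exponential integral
`(1/(2 log(1/ε))) ∫₀^t e^{2ms}/(s+ε²) ds`, and its limit `1` as `ε → 0`. -/
theorem exp_integral_estimate_and_limit (m : ℝ) :
    (∀ t ε : ℝ, 0 < t → ε ∈ Ioo (0:ℝ) (1/2) →
      abs ((1 / (2 * Real.log (1/ε))) * (∫ s in (0:ℝ)..t, Real.exp (2*m*s) / (s + ε^2)) - 1) ≤
        (Real.exp (2 * abs m * t) + abs (Real.log (t + ε^2))) / (2 * Real.log (1/ε))) ∧
    (∀ t : ℝ, 0 < t →
      Tendsto (fun ε : ℝ =>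
          (1 / (2 * Real.log (1/ε))) * ∫ s in (0:ℝ)..t, Real.exp (2*m*s) / (s + ε^2))
        (nhdsWithin 0 (Ioo (0:ℝ) (1/2))) (nhds 1)) := by
  constructor
  · exact fun t ε ht hε => exp_aux_estimate m t ε ht hε
  · intro t ht
    set F : ℝ → ℝ := fun ε =>
      (1 / (2 * Real.log (1/ε))) * ∫ s in (0:ℝ)..t, Real.exp (2*m*s) / (s + ε^2) with hF
    set C : ℝ := Real.exp (2 * |m| * t) + (|Real.log t| + |Real.log (t + 1/4)|) with hC
    have hlog : Tendsto (fun ε : ℝ => 2 * Real.log (1/ε))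
        (nhdsWithin 0 (Ioo (0:ℝ) (1/2))) atTop := by
      apply Tendsto.const_mul_atTop (by norm_num : (0:ℝ) < 2)
      apply Real.tendsto_log_atTop.comp
      have h1 : Tendsto (fun x : ℝ => x⁻¹) (nhdsWithin 0 (Ioi (0:ℝ))) atTop :=
        tendsto_inv_nhdsGT_zero
      have h2 : nhdsWithin (0:ℝ) (Ioo (0:ℝ) (1/2)) ≤ nhdsWithin 0 (Ioi (0:ℝ)) :=
        nhdsWithin_mono 0 (fun x hx => hx.1)
      exact (h1.comp (tendsto_id.mono_left h2)).congr (fun x => by simp [one_div])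
    have hg0 : Tendsto (fun ε : ℝ => C / (2 * Real.log (1/ε)))
        (nhdsWithin 0 (Ioo (0:ℝ) (1/2))) (nhds 0) :=
      Tendsto.div_atTop tendsto_const_nhds hlog
    have hsub : Tendsto (fun ε => F ε - 1) (nhdsWithin 0 (Ioo (0:ℝ) (1/2))) (nhds 0) := by
      apply squeeze_zero_norm' _ hg0
      filter_upwards [self_mem_nhdsWithin] with ε hε
      have h1 := exp_aux_estimate m t ε ht hε
      have hL : 0 < Real.log (1/ε) :=
        Real.log_pos (by rw [lt_div_iff₀ hε.1]; linarith [hε.2])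
      have h2 : |Real.log (t + ε^2)| ≤ |Real.log t| + |Real.log (t + 1/4)| := by
        have he1 : t ≤ t + ε^2 := by nlinarith [hε.1]
        have he2 : t + ε^2 ≤ t + 1/4 := by nlinarith [hε.2, hε.1]
        have hm1 : Real.log t ≤ Real.log (t + ε^2) := Real.log_le_log ht he1
        have hm2 : Real.log (t + ε^2) ≤ Real.log (t + 1/4) :=
          Real.log_le_log (by linarith) he2
        rw [abs_le]
        constructor
        · have := neg_abs_le (Real.log t)
          have := abs_nonneg (Real.log (t + 1/4))
          linarith
        · have := le_abs_self (Real.log (t + 1/4))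
          have := abs_nonneg (Real.log t)
          linarith
      have h3 : (Real.exp (2 * |m| * t) + |Real.log (t + ε^2)|) / (2 * Real.log (1/ε)) ≤
          C / (2 * Real.log (1/ε)) := by
        apply div_le_div_of_nonneg_right _ (by linarith)
        rw [hC]; linarith
      calc ‖F ε - 1‖ = |F ε - 1| := rfl
        _ ≤ _ := h1
        _ ≤ _ := h3
    have := hsub.add_const 1
    simpa using this
end

section
/- Let τ = [τ₁ ⋯ τ_n] be a finite rooted tree with inner-vertex set I (excluding the root 𝔬), and for t > 0 let D_τ(t) = { s ∈ [0,t]^I : s_v ≥ s_u whenever v is the parent of u }, with the root-variable convention s_𝔬 = t. Then for every symmetric function Ψ: R^I → R (integrable on [0,t]^I): ∫_{D_τ(t)} Ψ(s) ds = (1/(T(τ₁)! ⋯ T(τ_n)!)) ∫_{[0,t]^I} Ψ(s) ds, where T(τ_i) is the tree obtained from τ_i by removing its leaves, and ! is the tree factorial. -/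
open MeasureTheory Set

/- We formalize the inner-vertex structure of the rooted tree `τ = [τ₁ ⋯ τ_n]` (with
root `𝔬` excluded) abstractly as a finite nonempty vertex set `V` together with a
parent map `par : V → Option V` (`none` meaning that the parent is the root), required
to be acyclic, i.e. a forest.  The tree simplex `D_τ(t)` consists of those
`s ∈ [0,t]^V` which decrease away from the root (with the convention `s_𝔬 = t`, which
is implied by `s v ≤ t`).  The normalizing constant `T(τ₁)!⋯T(τ_n)!` (product of the
tree factorials of the trimmed subtrees) equals the product over `v ∈ V` of the number
of descendants of `v` (including `v` itself) within `V`. -/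



set_option linter.unusedSectionVars false

section Comb
universe u

variable {V : Type u} [Fintype V] [DecidableEq V]

/-- descendant relation -/
def TRel (par : V → Option V) : V → V → Prop :=
  Relation.ReflTransGen (fun a b => par a = some b)

def IsLE {n : ℕ} (par : V → Option V) (L : Fin n ≃ V) : Prop :=
  ∀ u v, TRel par u v → L.symm u ≤ L.symm v

variable {par : V → Option V} {m u v a b : V}

lemma trel_refl (v : V) : TRel par v v := Relation.ReflTransGen.refl

lemma max_rel (hm : par m = none) (h : TRel par m v) : v = m := by
  cases h.cases_head with
  | inl h => exact h.symm
  | inr h => obtain ⟨c, hc, -⟩ := h; rw [hm] at hc; cases hc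

/-- determinism: ancestors of a vertex are totally ordered -/
lemma rel_total (hab : TRel par u a) : TRel par u b → TRel par a b ∨ TRel par b a := by
  induction hab using Relation.ReflTransGen.head_induction_on with
  | refl => exact fun hb => Or.inl hb
  | @head x c hstep h ih =>
    intro hb
    cases hb.cases_head with
    | inl hbe => exact hbe ▸ Or.inr (Relation.ReflTransGen.head hstep h)
    | inr h2 =>
      obtain ⟨c', hc', hcb⟩ := h2
      rw [hstep] at hc'; injection hc' with e
      subst e
      exact ih hcb

/-- unique maximal ancestor -/
lemma max_ancestor_unique (ha : par a = none) (hb : par b = none)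
    (h1 : TRel par u a) (h2 : TRel par u b) : a = b := by
  cases rel_total h1 h2 with
  | inl h => exact (max_rel ha h).symm
  | inr h => exact max_rel hb h

lemma wf_flip (hforest : ∀ v : V, ¬ Relation.TransGen (fun u w => par u = some w) v v) :
    WellFounded (fun w u : V => par u = some w) := by
  have : WellFounded (Relation.TransGen (fun w u : V => par u = some w)) := by
    have hir : IsIrrefl V (Relation.TransGen (fun w u : V => par u = some w)) :=
      ⟨fun x hx => hforest x ((Relation.transGen_swap).mp hx)⟩
    exact Finite.wellFounded_of_trans_of_irrefl _
  exact Subrelation.wf (r := Relation.TransGen (fun w u : V => par u = some w)) (fun {x y} h => Relation.TransGen.single h) this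

/-- every vertex has a maximal ancestor -/
lemma exists_max_ancestor (hforest : ∀ v : V, ¬ Relation.TransGen (fun u w => par u = some w) v v)
    (v : V) : ∃ m, par m = none ∧ TRel par v m := by
  induction v using (wf_flip hforest).induction with
  | _ v ih =>
    cases hpar : par v with
    | none => exact ⟨v, hpar, trel_refl v⟩
    | some w =>
      obtain ⟨m, hm, hrel⟩ := ih w hpar
      exact ⟨m, hm, Relation.ReflTransGen.head hpar hrel⟩

end Comb

section Trim
variable {V : Type u} [Fintype V] [DecidableEq V] {par : V → Option V} {m : V}

def trimPar (par : V → Option V) (m : V) : {v : V // v ≠ m} → Option {v : V // v ≠ m} :=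
  fun u =>
    match par u.1 with
    | none => none
    | some w => if h : w = m then none else some ⟨w, h⟩

lemma trim_step {u v : {v : V // v ≠ m}} :
    trimPar par m u = some v ↔ par u.1 = some v.1 := by
  unfold trimPar
  cases hp : par u.1 with
  | none => simp
  | some w =>
    simp only []
    split_ifs with h
    · subst h
      simp only [reduceCtorEq, false_iff]
      intro hc
      injection hc with hc
      exact v.2 hc.symm
    · constructor
      · intro hc; injection hc with hc; rw [← hc]
      · intro hc; injection hc with hc
        congr 1
        exact Subtype.ext hc

lemma trel_ne (hm : par m = none) (hv : v ≠ m) (h : TRel par u v) : u ≠ m := by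
  intro he; subst he
  exact hv (max_rel hm h)

lemma trim_trel (hm : par m = none) {u v : {v : V // v ≠ m}} :
    TRel (trimPar par m) u v ↔ TRel par u.1 v.1 := by
  constructor
  · exact fun h => Relation.ReflTransGen.lift Subtype.val (fun a b hab => trim_step.mp hab) u v h
  · intro h
    have key : ∀ x, TRel par x v.1 → ∀ hx : x ≠ m, TRel (trimPar par m) ⟨x, hx⟩ v := by
      intro x h
      induction h using Relation.ReflTransGen.head_induction_on with
      | refl =>
        intro hx
        have he : (⟨v.1, hx⟩ : {v : V // v ≠ m}) = v := Subtype.ext rfl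
        rw [he]
        exact trel_refl v
      | @head a c hstep h' ih =>
        intro hx
        have hc : c ≠ m := trel_ne hm v.2 h'
        exact Relation.ReflTransGen.head
          ((trim_step (u := ⟨a, hx⟩) (v := ⟨c, hc⟩)).mpr hstep) (ih hc)
    exact key u.1 h u.2

end Trim

section Trim2
variable {V : Type u} [Fintype V] [DecidableEq V] {par : V → Option V} {m : V}

lemma trim_forest (hforest : ∀ v : V, ¬ Relation.TransGen (fun u w => par u = some w) v v) :
    ∀ v : {v : V // v ≠ m},
      ¬ Relation.TransGen (fun u w => trimPar par m u = some w) v v := by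
  intro v hv
  exact hforest v.1
    (Relation.TransGen.lift Subtype.val (fun a b hab => trim_step.mp hab) v v hv)

lemma trim_desc_card (hm : par m = none) (v : {v : V // v ≠ m}) :
    Nat.card {u : {v : V // v ≠ m} // TRel (trimPar par m) u v} =
      Nat.card {u : V // TRel par u v.1} := by
  refine Nat.card_congr ⟨fun u => ⟨u.1.1, (trim_trel hm).mp u.2⟩,
    fun u => ⟨⟨u.1, trel_ne hm v.2 u.2⟩, (trim_trel hm).mpr u.2⟩,
    fun u => by ext; rfl, fun u => by ext; rfl⟩

lemma sum_desc (hforest : ∀ v : V, ¬ Relation.TransGen (fun u w => par u = some w) v v) :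
    ∑ m ∈ Finset.univ.filter (fun m : V => par m = none),
      Nat.card {u : V // TRel par u m} = Fintype.card V := by
  classical
  have h1 : ∀ m : V, Nat.card {u : V // TRel par u m} =
      (Finset.univ.filter (fun u : V => TRel par u m)).card := by
    intro m; rw [Nat.card_eq_fintype_card, Fintype.card_subtype]
  simp_rw [h1]
  rw [← Finset.card_biUnion]
  · congr 1
    apply Finset.eq_univ_iff_forall.mpr
    intro u
    simp only [Finset.mem_biUnion, Finset.mem_filter, Finset.mem_univ, true_and]
    obtain ⟨mm, hmm, hrel⟩ := exists_max_ancestor hforest u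
    exact ⟨mm, hmm, hrel⟩
  · intro a ha b hb hab
    simp only [Finset.coe_filter, Finset.mem_univ, true_and, Set.mem_setOf_eq] at ha hb
    apply Finset.disjoint_left.mpr
    intro u hu hu'
    simp only [Finset.mem_filter, Finset.mem_univ, true_and] at hu hu'
    exact hab (max_ancestor_unique ha hb hu hu')

lemma desc_card_pos (v : V) : 0 < Nat.card {u : V // TRel par u v} :=
  Nat.card_pos_iff.mpr ⟨⟨⟨v, trel_refl v⟩⟩, inferInstance⟩

end Trim2

section Ext
variable {V : Type u} [Fintype V] [DecidableEq V] {par : V → Option V} {m : V} {k : ℕ}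

def resEquiv (L : Fin (k+1) ≃ V) (hL : L (Fin.last k) = m) : Fin k ≃ {v : V // v ≠ m} where
  toFun i := ⟨L i.castSucc,
    fun he => (Fin.castSucc_lt_last i).ne (L.injective (he.trans hL.symm))⟩
  invFun v := (L.symm v.1).castPred
    (fun he => v.2 (by have h2 := congrArg L he; rwa [Equiv.apply_symm_apply, hL] at h2))
  left_inv i := by
    apply Fin.castSucc_injective
    rw [Fin.castSucc_castPred, Equiv.symm_apply_apply]
  right_inv v := by
    apply Subtype.ext
    simp only [Fin.castSucc_castPred, Equiv.apply_symm_apply]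

def extFun (m : V) (L' : Fin k ≃ {v : V // v ≠ m}) : Fin (k+1) ≃ V where
  toFun i := if h : i = Fin.last k then m else (L' (i.castPred h)).1
  invFun v := if h : v = m then Fin.last k else (L'.symm ⟨v, h⟩).castSucc
  left_inv i := by
    by_cases h : i = Fin.last k
    · simp [h]
    · simp only [dif_neg h, dif_neg (L' (i.castPred h)).2, Subtype.coe_eta,
        Equiv.symm_apply_apply, Fin.castSucc_castPred]
  right_inv v := by
    by_cases h : v = m
    · simp [h]
    · simp only [dif_neg h, dif_neg (Fin.castSucc_lt_last (L'.symm ⟨v, h⟩)).ne,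
        Fin.castPred_castSucc, Equiv.apply_symm_apply]

lemma extFun_last (L' : Fin k ≃ {v : V // v ≠ m}) : extFun m L' (Fin.last k) = m := by
  simp [extFun]

lemma card_fiber_eq (hm : par m = none) :
    Nat.card {L : Fin (k+1) ≃ V // IsLE par L ∧ L (Fin.last k) = m} =
      Nat.card {L' : Fin k ≃ {v : V // v ≠ m} // IsLE (trimPar par m) L'} := by
  apply Nat.card_congr
  refine ⟨fun L => ⟨resEquiv L.1 L.2.2, ?_⟩, fun L' => ⟨extFun m L'.1, ?_, extFun_last L'.1⟩,
      ?_, ?_⟩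
  · -- IsLE transfers forward
    obtain ⟨L, hLE, hLm⟩ := L
    intro u v hr
    have h2 : L.symm u.1 ≤ L.symm v.1 := hLE u.1 v.1 ((trim_trel hm).mp hr)
    have hu : L.symm u.1 ≠ Fin.last k := fun he => u.2
      (by have h3 := congrArg L he; rwa [Equiv.apply_symm_apply, hLm] at h3)
    have hv : L.symm v.1 ≠ Fin.last k := fun he => v.2
      (by have h3 := congrArg L he; rwa [Equiv.apply_symm_apply, hLm] at h3)
    exact (Fin.castPred_le_castPred_iff (hi := hu) (hj := hv)).mpr h2
  · -- IsLE transfers backward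
    obtain ⟨L', hLE⟩ := L'
    intro u v hr
    show (extFun m L').symm u ≤ (extFun m L').symm v
    show (if h : u = m then Fin.last k else (L'.symm ⟨u, h⟩).castSucc) ≤
      (if h : v = m then Fin.last k else (L'.symm ⟨v, h⟩).castSucc)
    by_cases hv : v = m
    · rw [dif_pos hv]; exact Fin.le_last _
    · have hu : u ≠ m := trel_ne hm hv hr
      rw [dif_neg hv, dif_neg hu, Fin.castSucc_le_castSucc_iff]
      exact hLE ⟨u, hu⟩ ⟨v, hv⟩ ((trim_trel hm).mpr hr)
  · -- left inverse
    rintro ⟨L, hLE, hLm⟩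
    apply Subtype.ext
    apply Equiv.ext
    intro i
    show (if h : i = Fin.last k then m else ((resEquiv L hLm) (i.castPred h)).1) = L i
    by_cases h : i = Fin.last k
    · rw [dif_pos h, h, hLm]
    · rw [dif_neg h]
      show L ((i.castPred h).castSucc) = L i
      rw [Fin.castSucc_castPred]
  · -- right inverse
    rintro ⟨L', hLE⟩
    apply Subtype.ext
    apply Equiv.ext
    intro j
    apply Subtype.ext
    show (extFun m L' j.castSucc : V) = (L' j).1
    show (if h : j.castSucc = Fin.last k then m else (L' ((j.castSucc).castPred h)).1) = (L' j).1
    rw [dif_neg (Fin.castSucc_lt_last _).ne, Fin.castPred_castSucc]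

end Ext

lemma card_linext_mul :
    ∀ (n : ℕ) (V : Type u) [Fintype V] [DecidableEq V] (par : V → Option V),
      (∀ v : V, ¬ Relation.TransGen (fun u w => par u = some w) v v) →
      Fintype.card V = n →
      Nat.card {L : Fin n ≃ V // IsLE par L} *
        ∏ v : V, Nat.card {u : V // TRel par u v} = Nat.factorial n := by
  intro n
  induction n with
  | zero =>
    intro V _ _ par hf hV
    have hemp : IsEmpty V := Fintype.card_eq_zero_iff.mp hV
    have h1 : Nat.card {L : Fin 0 ≃ V // IsLE par L} = 1 := by
      rw [Nat.card_eq_one_iff_unique]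
      refine ⟨⟨fun a b => Subtype.ext (Equiv.ext fun i => i.elim0)⟩,
        ⟨⟨Equiv.equivOfIsEmpty _ _, fun u => isEmptyElim u⟩⟩⟩
    rw [h1, one_mul, Finset.univ_eq_empty, Finset.prod_empty]
    rfl
  | succ k ih =>
    intro V _ _ par hf hV
    classical
    set M : Finset V := Finset.univ.filter (fun m : V => par m = none) with hM
    set Elin : Finset (Fin (k+1) ≃ V) := Finset.univ.filter (IsLE par) with hE
    have hlast : ∀ L ∈ Elin, L (Fin.last k) ∈ M := by
      intro L hL
      simp only [hE, Finset.mem_filter, Finset.mem_univ, true_and] at hL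
      simp only [hM, Finset.mem_filter, Finset.mem_univ, true_and]
      by_contra hpar
      obtain ⟨c, hc⟩ := Option.ne_none_iff_exists'.mp hpar
      have h1 : TRel par (L (Fin.last k)) c := Relation.ReflTransGen.single hc
      have h2 := hL _ _ h1
      rw [Equiv.symm_apply_apply] at h2
      have h3 : L.symm c = Fin.last k := le_antisymm (Fin.le_last _) h2
      have h4 : c = L (Fin.last k) := by rw [← h3, Equiv.apply_symm_apply]
      rw [← h4] at hc
      exact hf c (Relation.TransGen.single hc)
    have hfib : Elin.card = ∑ m ∈ M, (Elin.filter (fun L => L (Fin.last k) = m)).card :=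
      Finset.card_eq_sum_card_fiberwise hlast
    have hcard : Nat.card {L : Fin (k+1) ≃ V // IsLE par L} = Elin.card := by
      rw [Nat.card_eq_fintype_card, Fintype.card_subtype]
    have hper : ∀ m ∈ M, (Elin.filter (fun L => L (Fin.last k) = m)).card *
        ∏ v : V, Nat.card {u : V // TRel par u v} =
        Nat.factorial k * Nat.card {u : V // TRel par u m} := by
      intro m hmM
      have hm : par m = none := by
        simpa only [hM, Finset.mem_filter, Finset.mem_univ, true_and] using hmM
      have e1 : (Elin.filter (fun L => L (Fin.last k) = m)).card
          = Nat.card {L : Fin (k+1) ≃ V // IsLE par L ∧ L (Fin.last k) = m} := by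
        rw [Nat.card_eq_fintype_card, Fintype.card_subtype, hE, Finset.filter_filter]
      have e2 := card_fiber_eq (par := par) (k := k) hm
      have hcard' : Fintype.card {v : V // v ≠ m} = k := by
        have := Fintype.card_subtype_compl (fun v : V => v = m)
        rw [Fintype.card_subtype_eq, hV] at this
        exact this
      have e3 := ih {v : V // v ≠ m} (trimPar par m) (trim_forest hf) hcard'
      have e4 : ∏ v : V, Nat.card {u : V // TRel par u v}
          = Nat.card {u : V // TRel par u m} *
            ∏ v' : {v : V // v ≠ m}, Nat.card {u : V // TRel par u v'.1} := by
        rw [← Finset.mul_prod_erase Finset.univ _ (Finset.mem_univ m)]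
        congr 1
        exact Finset.prod_subtype (Finset.univ.erase m) (by simp) _
      have e5 : ∏ v' : {v : V // v ≠ m}, Nat.card {u : V // TRel par u v'.1}
          = ∏ v' : {v : V // v ≠ m}, Nat.card {u // TRel (trimPar par m) u v'} :=
        Finset.prod_congr rfl (fun v' _ => (trim_desc_card hm v').symm)
      rw [e1, e2, e4, e5]
      calc Nat.card {L' : Fin k ≃ {v : V // v ≠ m} // IsLE (trimPar par m) L'} *
            (Nat.card {u : V // TRel par u m} *
              ∏ v' : {v : V // v ≠ m}, Nat.card {u // TRel (trimPar par m) u v'})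
          = Nat.card {u : V // TRel par u m} *
            (Nat.card {L' : Fin k ≃ {v : V // v ≠ m} // IsLE (trimPar par m) L'} *
              ∏ v' : {v : V // v ≠ m}, Nat.card {u // TRel (trimPar par m) u v'}) := by
            ring
        _ = Nat.card {u : V // TRel par u m} * Nat.factorial k := by rw [e3]
        _ = Nat.factorial k * Nat.card {u : V // TRel par u m} := mul_comm _ _
    rw [hcard, hfib, Finset.sum_mul, Finset.sum_congr rfl hper, ← Finset.mul_sum,
      sum_desc hf, hV, Nat.factorial_succ]
    ring

section Analysis

open MeasureTheory Set

variable {V : Type*} [Fintype V] [DecidableEq V]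

lemma volume_nonInj_eq_zero :
    volume {s : V → ℝ | ¬ Function.Injective s} = 0 := by
  have h1 : {s : V → ℝ | ¬ Function.Injective s} ⊆
      ⋃ (p : V × V) (_ : p.1 ≠ p.2), {s : V → ℝ | s p.1 = s p.2} := by
    intro s hs
    simp only [Function.Injective, not_forall, mem_setOf_eq] at hs
    obtain ⟨u, v, he, hne⟩ := hs
    exact Set.mem_iUnion₂.mpr ⟨(u, v), hne, he⟩
  refine measure_mono_null h1 (measure_iUnion_null fun p => measure_iUnion_null fun hne => ?_)
  set f : (V → ℝ) →ₗ[ℝ] ℝ :=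
    (LinearMap.proj p.1 : (V → ℝ) →ₗ[ℝ] ℝ) - (LinearMap.proj p.2 : (V → ℝ) →ₗ[ℝ] ℝ) with hf
  have h2 : {s : V → ℝ | s p.1 = s p.2} = (LinearMap.ker f : Set (V → ℝ)) := by
    ext s
    simp [hf, LinearMap.mem_ker, sub_eq_zero]
  rw [h2]
  apply Measure.addHaar_submodule
  intro h
  rw [LinearMap.ker_eq_top] at h
  have h3 : f (Pi.single p.1 1) = 0 := by rw [h]; rfl
  rw [hf] at h3
  simp only [LinearMap.sub_apply, LinearMap.proj_apply, Pi.single_eq_same,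
    Pi.single_eq_of_ne (Ne.symm hne), sub_zero] at h3
  exact one_ne_zero h3

lemma exists_unique_mono (s : V → ℝ) (hs : Function.Injective s) :
    ∃! L : Fin (Fintype.card V) ≃ V, Monotone fun i => s (L i) := by
  classical
  set n := Fintype.card V with hn
  set F : Finset ℝ := Finset.univ.image s with hF
  have hFc : F.card = n := by rw [hF, Finset.card_image_of_injective _ hs, Finset.card_univ]
  set o := F.orderIsoOfFin hFc with ho
  have hg : Function.Bijective
      (fun v : V => (⟨s v, Finset.mem_image_of_mem s (Finset.mem_univ v)⟩ : {x // x ∈ F})) := by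
    rw [Fintype.bijective_iff_injective_and_card]
    refine ⟨fun a b hab => hs (congrArg Subtype.val hab : s a = s b), ?_⟩
    rw [Fintype.card_coe, hFc]
  set g := Equiv.ofBijective _ hg with hgdef
  set L0 : Fin n ≃ V := o.toEquiv.trans g.symm with hL0
  have hsl : ∀ i, s (L0 i) = (o i : ℝ) := by
    intro i
    have h1 : g (L0 i) = o i := by
      rw [hL0]; exact g.apply_symm_apply _
    exact congrArg Subtype.val h1
  have hmono : StrictMono fun i => s (L0 i) := by
    intro i j hij
    show s (L0 i) < s (L0 j)
    rw [hsl, hsl]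
    exact Subtype.coe_lt_coe.mpr (o.strictMono hij)
  refine ⟨L0, hmono.monotone, ?_⟩
  intro L hL
  have hsm : StrictMono fun i => s (L i) :=
    hL.strictMono_of_injective (hs.comp L.injective)
  have hr : Set.range (fun i => s (L i)) = Set.range (fun i => s (L0 i)) := by
    have key : ∀ M : Fin n ≃ V, Set.range (fun i => s (M i)) = Set.range s := by
      intro M
      rw [show (fun i => s (M i)) = s ∘ M from rfl, M.surjective.range_comp]
    rw [key, key]
  have heq := (@StrictMono.range_inj (Fin n) ℝ _ _ (inferInstance : WellFoundedLT (Fin n)) _ _ hsm hmono).mp hr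
  apply Equiv.ext
  intro i
  exact hs (congrFun heq i)

end Analysis

section Chambers

open MeasureTheory Set

variable {V : Type*} [Fintype V] [DecidableEq V]

def cham {n : ℕ} (L : Fin n ≃ V) : Set (V → ℝ) := {s | Monotone fun i => s (L i)}

lemma measurableSet_cham {n : ℕ} (L : Fin n ≃ V) : MeasurableSet (cham L) := by
  have h : cham L = ⋂ (p : Fin n × Fin n), ⋂ (_ : p.1 ≤ p.2),
      {s : V → ℝ | s (L p.1) ≤ s (L p.2)} := by
    ext s
    simp only [cham, mem_setOf_eq, mem_iInter]
    exact ⟨fun h p hp => h hp, fun h i j hij => h (i, j) hij⟩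
  rw [h]
  exact MeasurableSet.iInter fun p => MeasurableSet.iInter fun _ =>
    measurableSet_le (measurable_pi_apply _) (measurable_pi_apply _)

lemma cham_integral_invariant {n : ℕ} (t : ℝ) (Ψ : (V → ℝ) → ℝ)
    (hsymm : ∀ (σ : Equiv.Perm V) (s : V → ℝ), Ψ (s ∘ σ) = Ψ s)
    (L L' : Fin n ≃ V) :
    ∫ s in cham L ∩ (univ.pi fun _ : V => Icc (0:ℝ) t), Ψ s =
      ∫ s in cham L' ∩ (univ.pi fun _ : V => Icc (0:ℝ) t), Ψ s := by
  set π : Equiv.Perm V := L.symm.trans L' with hπ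
  set φm := (MeasurableEquiv.piCongrLeft (fun _ : V => ℝ) π).symm with hφm
  have hφ : ∀ s : V → ℝ, φm s = s ∘ π := by
    intro s; funext a
    show (Equiv.piCongrLeft (fun _ : V => ℝ) π).symm s a = s (π a)
    rw [Equiv.piCongrLeft_symm_apply]
  have hmp : MeasurePreserving φm volume volume :=
    (volume_measurePreserving_piCongrLeft (fun _ : V => ℝ) π).symm
  have hpre : φm ⁻¹' (cham L ∩ (univ.pi fun _ : V => Icc (0:ℝ) t)) =
      cham L' ∩ (univ.pi fun _ : V => Icc (0:ℝ) t) := by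
    have hco : ⇑φm = fun s : V → ℝ => s ∘ π := funext hφ
    rw [hco, Set.preimage_inter]
    congr 1
    · ext s
      simp only [Set.mem_preimage, cham, mem_setOf_eq]
      constructor
      · intro h i j hij
        have h2 := h hij
        simpa [hπ] using h2
      · intro h i j hij
        have h2 := h hij
        show s (π (L i)) ≤ s (π (L j))
        simpa [hπ] using h2
    · ext s
      simp only [Set.mem_preimage]
      constructor
      · intro h
        refine Set.mem_univ_pi.mpr fun v => ?_
        have h2 := Set.mem_univ_pi.mp h (π.symm v)
        simpa using h2
      · intro h
        refine Set.mem_univ_pi.mpr fun v => ?_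
        show s (π v) ∈ Icc (0:ℝ) t
        exact Set.mem_univ_pi.mp h (π v)
  have hΨ : ∀ s, Ψ (φm s) = Ψ s := fun s => by rw [hφ]; exact hsymm π s
  have h1 := hmp.setIntegral_preimage_emb (φm.measurableEmbedding) Ψ
    (cham L ∩ (univ.pi fun _ : V => Icc (0:ℝ) t))
  rw [hpre] at h1
  rw [← h1]
  simp only [hΨ]

end Chambers


/-- Tree-simplex integral of a symmetric function: for every symmetric `Ψ`,
`∫_{D_τ(t)} Ψ = (1/(T(τ₁)!⋯T(τ_n)!)) ∫_{[0,t]^V} Ψ`. -/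
theorem tree_simplex_integral_of_symmetric
    {V : Type*} [Fintype V] [DecidableEq V] [Nonempty V]
    (par : V → Option V)
    (hforest : ∀ v : V, ¬ Relation.TransGen (fun u w => par u = some w) v v)
    (t : ℝ) (ht : 0 < t)
    (Ψ : (V → ℝ) → ℝ)
    (hsymm : ∀ (σ : Equiv.Perm V) (s : V → ℝ), Ψ (s ∘ σ) = Ψ s)
    (hint : IntegrableOn Ψ (Set.univ.pi fun _ : V => Icc (0:ℝ) t)) :
    (∫ s in {s : V → ℝ | (∀ v, s v ∈ Icc (0:ℝ) t) ∧
        ∀ u v, par u = some v → s u ≤ s v}, Ψ s) =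
      (1 / ∏ v : V,
          (Set.ncard {u : V | Relation.ReflTransGen (fun a b => par a = some b) u v} : ℝ)) *
        ∫ s in (Set.univ.pi fun _ : V => Icc (0:ℝ) t), Ψ s := by
  classical
  set n := Fintype.card V with hn
  set cube : Set (V → ℝ) := Set.univ.pi fun _ : V => Icc (0:ℝ) t with hcube
  set D : Set (V → ℝ) := {s | (∀ v, s v ∈ Icc (0:ℝ) t) ∧
    ∀ u v, par u = some v → s u ≤ s v} with hD
  have hcubeM : MeasurableSet cube := MeasurableSet.univ_pi fun _ => measurableSet_Icc
  have hDM : MeasurableSet D := by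
    have hset : D = (⋂ v, (fun s : V → ℝ => s v) ⁻¹' Icc (0:ℝ) t) ∩
        (⋂ (p : V × V) (_ : par p.1 = some p.2), {s : V → ℝ | s p.1 ≤ s p.2}) := by
      ext s
      simp only [hD, mem_setOf_eq, mem_inter_iff, mem_iInter, Set.mem_preimage]
      constructor
      · rintro ⟨h1, h2⟩; exact ⟨h1, fun p hp => h2 p.1 p.2 hp⟩
      · rintro ⟨h1, h2⟩; exact ⟨h1, fun u v huv => h2 (u, v) huv⟩
    rw [hset]
    exact (MeasurableSet.iInter fun v =>
        (measurable_pi_apply v) measurableSet_Icc).inter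
      (MeasurableSet.iInter fun p => MeasurableSet.iInter fun _ =>
        measurableSet_le (measurable_pi_apply _) (measurable_pi_apply _))
  have hDcube : ∀ s, s ∈ D → s ∈ cube := fun s hs => Set.mem_univ_pi.mpr fun v => hs.1 v
  have hae : ∀ᵐ s : (V → ℝ) ∂volume, Function.Injective s := by
    rw [ae_iff]
    exact volume_nonInj_eq_zero
  set E : Finset (Fin n ≃ V) := Finset.univ.filter (IsLE par) with hE
  have hintL : ∀ L : Fin n ≃ V, Integrable ((cham L ∩ cube).indicator Ψ) := fun L =>
    (integrable_indicator_iff ((measurableSet_cham L).inter hcubeM)).mpr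
      (hint.mono_set inter_subset_right)
  have hmem_of : ∀ (L : Fin n ≃ V), IsLE par L → ∀ s, s ∈ cham L ∩ cube → s ∈ D := by
    intro L hLE s hsmem
    obtain ⟨h1, h2⟩ := hsmem
    refine ⟨fun v => Set.mem_univ_pi.mp h2 v, fun u v huv => ?_⟩
    have h4 : L.symm u ≤ L.symm v := hLE u v (Relation.ReflTransGen.single huv)
    have h5 := h1 h4
    simpa using h5
  have hD_rel : ∀ s ∈ D, ∀ u v, TRel par u v → s u ≤ s v := by
    intro s hs u v h
    induction h with
    | refl => exact le_refl _
    | tail hab hbc ih => exact le_trans ih (hs.2 _ _ hbc)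
  have hkey : ∀ s : V → ℝ, Function.Injective s →
      (cube.indicator Ψ s = ∑ L : Fin n ≃ V, (cham L ∩ cube).indicator Ψ s) ∧
      (D.indicator Ψ s = ∑ L ∈ E, (cham L ∩ cube).indicator Ψ s) := by
    intro s hs
    by_cases hscube : s ∈ cube
    · obtain ⟨L0, hL0, hL0u⟩ := exists_unique_mono s hs
      have hunique : ∀ L : Fin n ≃ V, s ∈ cham L → L = L0 := fun L hL => hL0u L hL
      constructor
      · rw [Set.indicator_of_mem hscube]
        rw [Finset.sum_eq_single L0]
        · rw [Set.indicator_of_mem (Set.mem_inter (show s ∈ cham L0 from hL0) hscube)]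
        · intro L _ hLne
          rw [Set.indicator_of_notMem]
          intro hmem
          exact hLne (hunique L hmem.1)
        · intro h; exact absurd (Finset.mem_univ L0) h
      · by_cases hsD : s ∈ D
        · rw [Set.indicator_of_mem hsD]
          have hL0E : L0 ∈ E := by
            rw [hE, Finset.mem_filter]
            refine ⟨Finset.mem_univ _, ?_⟩
            intro u v huv
            by_contra hlt
            push_neg at hlt
            have hstrict : StrictMono fun i => s (L0 i) :=
              hL0.strictMono_of_injective (hs.comp L0.injective)
            have h6 := hstrict hlt
            simp only [Equiv.apply_symm_apply] at h6
            exact absurd (hD_rel s hsD u v huv) (not_le.mpr h6)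
          rw [Finset.sum_eq_single_of_mem L0 hL0E]
          · rw [Set.indicator_of_mem (Set.mem_inter (show s ∈ cham L0 from hL0) hscube)]
          · intro L _ hLne
            rw [Set.indicator_of_notMem]
            intro hmem
            exact hLne (hunique L hmem.1)
        · rw [Set.indicator_of_notMem hsD]
          symm
          apply Finset.sum_eq_zero
          intro L hLmem
          rw [Set.indicator_of_notMem]
          intro hmem
          have hLE : IsLE par L := by
            rw [hE] at hLmem
            exact (Finset.mem_filter.mp hLmem).2
          exact hsD (hmem_of L hLE s hmem)
    · have hterm : ∀ L : Fin n ≃ V, (cham L ∩ cube).indicator Ψ s = 0 := fun L =>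
        Set.indicator_of_notMem (fun h => hscube h.2) _
      constructor
      · rw [Set.indicator_of_notMem hscube,
          Finset.sum_congr rfl (fun L _ => hterm L), Finset.sum_const, smul_zero]
      · rw [Set.indicator_of_notMem (fun h => hscube (hDcube s h)),
          Finset.sum_congr rfl (fun L _ => hterm L), Finset.sum_const, smul_zero]
  have hint1 : ∫ s in cube, Ψ s = ∑ L : Fin n ≃ V, ∫ s in cham L ∩ cube, Ψ s := by
    rw [← integral_indicator hcubeM]
    rw [integral_congr_ae (hae.mono fun s hs => (hkey s hs).1)]
    rw [integral_finset_sum _ (fun L _ => hintL L)]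
    exact Finset.sum_congr rfl fun L _ =>
      integral_indicator ((measurableSet_cham L).inter hcubeM)
  have hint2 : ∫ s in D, Ψ s = ∑ L ∈ E, ∫ s in cham L ∩ cube, Ψ s := by
    rw [← integral_indicator hDM]
    rw [integral_congr_ae (hae.mono fun s hs => (hkey s hs).2)]
    rw [integral_finset_sum _ (fun L _ => hintL L)]
    exact Finset.sum_congr rfl fun L _ =>
      integral_indicator ((measurableSet_cham L).inter hcubeM)
  set L1 : Fin n ≃ V := (Fintype.equivFin V).symm with hL1
  set c := ∫ s in cham L1 ∩ cube, Ψ s with hc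
  have hcham_eq : ∀ L : Fin n ≃ V, ∫ s in cham L ∩ cube, Ψ s = c :=
    fun L => cham_integral_invariant t Ψ hsymm L L1
  set Pn : ℕ := ∏ v : V, Nat.card {u : V // TRel par u v} with hPn
  have hkey2 := card_linext_mul n V par hforest hn.symm
  have hEcard : Nat.card {L : Fin n ≃ V // IsLE par L} = E.card := by
    rw [Nat.card_eq_fintype_card, Fintype.card_subtype]
  have hcount : E.card * Pn = Nat.factorial n := by
    rw [← hEcard, hPn]
    exact hkey2
  have hprod : ∏ v : V,
      ((Set.ncard {u : V | Relation.ReflTransGen (fun a b => par a = some b) u v}) : ℝ)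
      = (Pn : ℝ) := by
    rw [hPn, Nat.cast_prod]
    apply Finset.prod_congr rfl
    intro v _
    congr 1
  have hPpos : 0 < Pn := by
    rw [hPn]
    exact Finset.prod_pos fun v _ => desc_card_pos v
  have hcubecard : ∑ L : Fin n ≃ V, ∫ s in cham L ∩ cube, Ψ s = (Nat.factorial n : ℝ) * c := by
    rw [Finset.sum_congr rfl (fun L _ => hcham_eq L), Finset.sum_const, nsmul_eq_mul,
      Finset.card_univ, Fintype.card_equiv L1, Fintype.card_fin]
  have hDcard : ∑ L ∈ E, ∫ s in cham L ∩ cube, Ψ s = (E.card : ℝ) * c := by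
    rw [Finset.sum_congr rfl (fun L _ => hcham_eq L), Finset.sum_const, nsmul_eq_mul]
  rw [hint2, hDcard, hint1, hcubecard, hprod]
  have hfact : (Nat.factorial n : ℝ) = (E.card : ℝ) * (Pn : ℝ) := by
    exact_mod_cast hcount.symm
  rw [hfact]
  have hPne : (Pn : ℝ) ≠ 0 := Nat.cast_ne_zero.mpr hPpos.ne'
  field_simp
end
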